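/- For every positive integer n, the number of representations of n as an ordered sum of two squares of integers equals 4(d_1(n) - d_3(n)), where d_j(n) is the number of divisors of n congruent to j modulo 4. -/

import Mathlib

namespace TwoSq

open Zsqrtd

abbrev GI := GaussianInt
def gi : GI := ⟨0, 1⟩

/-- natural-number norm -/
def nnorm (z : GI) : ℕ := z.norm.natAbs

lemma norm_def' (z : GI) : z.norm = z.re * z.re + z.im * z.im := by
  rw [Zsqrtd.norm_def]; ring

lemma sq_le {a n : ℤ} (h : a * a ≤ n) : -n ≤ a ∧ a ≤ n := by
  constructor <;> nlinarith [mul_self_nonneg a, mul_self_nonneg (a - 1), mul_self_nonneg (a + 1)]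

lemma isUnit_iff' (z : GI) : IsUnit z ↔ z = 1 ∨ z = -1 ∨ z = gi ∨ z = -gi := by
  constructor
  · intro h
    have h1 : z.norm = 1 := (Zsqrtd.norm_eq_one_iff' (by norm_num) z).mpr h
    rw [norm_def'] at h1
    have hre := sq_le (show z.re * z.re ≤ 1 by nlinarith [mul_self_nonneg z.im])
    have him := sq_le (show z.im * z.im ≤ 1 by nlinarith [mul_self_nonneg z.re])
    obtain ⟨x, y⟩ := z
    simp only [Zsqrtd.ext_iff, gi] at *
    obtain ⟨h2, h3⟩ := hre; obtain ⟨h4, h5⟩ := him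
    interval_cases x <;> interval_cases y <;> simp_all <;> omega
  · rintro (rfl | rfl | rfl | rfl)
    · exact isUnit_one
    · exact isUnit_one.neg
    · exact (Zsqrtd.norm_eq_one_iff' (by norm_num) _).mp (by simp [norm_def', gi])
    · exact ((Zsqrtd.norm_eq_one_iff' (by norm_num) _).mp (by simp [norm_def', gi])).neg

lemma associated_iff (z w : GI) :
    Associated z w ↔ w = z ∨ w = -z ∨ w = gi * z ∨ w = -gi * z := by
  constructor
  · rintro ⟨u, rfl⟩
    rcases (isUnit_iff' (u : GI)).mp u.isUnit with h | h | h | h <;> rw [h]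
    · left; ring
    · right; left; ring
    · right; right; left; ring
    · right; right; right; ring
  · have hI : IsUnit gi := (isUnit_iff' gi).mpr (by tauto)
    obtain ⟨uI, huI⟩ := hI
    rintro (rfl | rfl | rfl | rfl)
    · exact Associated.refl _
    · exact ⟨-1, by simp⟩
    · exact ⟨uI, by rw [huI]; ring⟩
    · exact ⟨-uI, by rw [Units.val_neg, huI]; ring⟩

lemma norm_dvd_norm {a b : GI} (h : a ∣ b) : a.norm ∣ b.norm := by
  obtain ⟨c, rfl⟩ := h; rw [Zsqrtd.norm_mul]; exact dvd_mul_right _ _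

lemma isCoprime_of_norm_coprime {a b : GI}
    (h : Nat.Coprime (nnorm a) (nnorm b)) : IsCoprime a b := by
  rw [← EuclideanDomain.gcd_isUnit_iff]
  rw [← Zsqrtd.norm_eq_one_iff]
  have h1 := Int.natAbs_dvd_natAbs.mpr (norm_dvd_norm (EuclideanDomain.gcd_dvd_left a b))
  have h2 := Int.natAbs_dvd_natAbs.mpr (norm_dvd_norm (EuclideanDomain.gcd_dvd_right a b))
  exact Nat.eq_one_of_dvd_coprimes h h1 h2


lemma norm_eq (z : GI) : z.norm = (nnorm z : ℤ) :=
  (Int.natAbs_of_nonneg (Zsqrtd.norm_nonneg (by norm_num) z)).symm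

lemma nnorm_mul (a b : GI) : nnorm (a * b) = nnorm a * nnorm b := by
  simp [nnorm, Zsqrtd.norm_mul, Int.natAbs_mul]

lemma nnorm_eq_zero {z : GI} : nnorm z = 0 ↔ z = 0 := by
  rw [nnorm, Int.natAbs_eq_zero, Zsqrtd.norm_eq_zero_iff (by norm_num : (-1:ℤ) < 0)]

lemma nnorm_eq_one {z : GI} : nnorm z = 1 ↔ IsUnit z := Zsqrtd.norm_eq_one_iff

lemma nnorm_star (z : GI) : nnorm (star z) = nnorm z := by
  simp [nnorm, Zsqrtd.norm_conj]

lemma nnorm_natCast (N : ℕ) : nnorm (N : GI) = N * N := by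
  simp [nnorm, Zsqrtd.norm_natCast, Int.natAbs_mul]

lemma nnorm_one : nnorm (1 : GI) = 1 := by simp [nnorm]

lemma self_dvd_nnorm (z : GI) : z ∣ (nnorm z : GI) := by
  have h : ((nnorm z : ℤ) : GI) = z * star z := by
    rw [← norm_eq]; exact Zsqrtd.norm_eq_mul_conj z
  have h2 : ((nnorm z : ℕ) : GI) = ((nnorm z : ℤ) : GI) := by push_cast; rfl
  rw [h2, h]; exact dvd_mul_right _ _

lemma prime_dvd_nat {π : GI} (hπ : Prime π) :
    ∀ N : ℕ, N ≠ 0 → π ∣ (N : GI) → ∃ q : ℕ, q.Prime ∧ q ∣ N ∧ π ∣ (q : GI) := by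
  intro N
  induction N using Nat.strong_induction_on with
  | _ N ih =>
    intro hN0 hdvd
    rcases eq_or_ne N 1 with rfl | hN1
    · exact absurd (isUnit_of_dvd_one (by simpa using hdvd)) hπ.not_unit
    · obtain ⟨q, hq, M, rfl⟩ := Nat.exists_prime_and_dvd hN1
      have hM0 : M ≠ 0 := by rintro rfl; simp at hN0
      have : π ∣ (q : GI) * (M : GI) := by push_cast at hdvd ⊢; exact hdvd
      rcases hπ.2.2 _ _ this with h | h
      · exact ⟨q, hq, dvd_mul_right _ _, h⟩
      · obtain ⟨q', hq', hdvd', hπq'⟩ := ih M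
          (lt_of_lt_of_le (Nat.lt_mul_iff_one_lt_left (Nat.pos_of_ne_zero hM0) |>.mpr hq.one_lt)
            le_rfl) hM0 h
        exact ⟨q', hq', hdvd'.mul_left _, hπq'⟩

lemma nnorm_prime {π : GI} (hπ : Prime π) :
    ∃ q : ℕ, q.Prime ∧ (nnorm π = q ∨ nnorm π = q ^ 2) := by
  have hN0 : nnorm π ≠ 0 := fun h => hπ.ne_zero (nnorm_eq_zero.mp h)
  obtain ⟨q, hq, _, hπq⟩ := prime_dvd_nat hπ _ hN0 (self_dvd_nnorm π)
  have hdvd : nnorm π ∣ q ^ 2 := by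
    obtain ⟨c, hc⟩ := hπq
    have : nnorm (q : GI) = nnorm π * nnorm c := by rw [← nnorm_mul, ← hc]
    rw [nnorm_natCast, ← pow_two] at this
    exact ⟨nnorm c, this⟩
  obtain ⟨m, hm2, hm⟩ := (Nat.dvd_prime_pow hq).mp hdvd
  interval_cases m
  · exact absurd (nnorm_eq_one.mp (by simpa using hm)) hπ.not_unit
  · exact ⟨q, hq, Or.inl (by simpa using hm)⟩
  · exact ⟨q, hq, Or.inr hm⟩


/-- Splitting lemma: an element whose norm is a coprime product factors accordingly. -/
lemma split (z : GI) : ∀ m n : ℕ, Nat.Coprime m n → nnorm z = m * n →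
    ∃ x y : GI, z = x * y ∧ nnorm x = m ∧ nnorm y = n := by
  induction z using UniqueFactorizationMonoid.induction_on_prime with
  | h₁ =>
    intro m n hco hnorm
    rw [nnorm_eq_zero.mpr rfl] at hnorm
    rcases Nat.mul_eq_zero.mp hnorm.symm with rfl | rfl
    · have hn : n = 1 := by simpa [Nat.coprime_zero_left] using hco
      exact ⟨0, 1, by simp, nnorm_eq_zero.mpr rfl, by rw [hn]; exact nnorm_one⟩
    · have hm : m = 1 := by simpa [Nat.coprime_zero_right] using hco
      exact ⟨1, 0, by simp, by rw [hm]; exact nnorm_one, nnorm_eq_zero.mpr rfl⟩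
  | h₂ z hu =>
    intro m n hco hnorm
    rw [nnorm_eq_one.mpr hu] at hnorm
    have hm : m = 1 := Nat.eq_one_of_mul_eq_one_right hnorm.symm
    have hn : n = 1 := Nat.eq_one_of_mul_eq_one_left hnorm.symm
    exact ⟨z, 1, by simp, by rw [hm]; exact nnorm_eq_one.mpr hu, by rw [hn]; exact nnorm_one⟩
  | h₃ a p ha hp ih =>
    -- first prove a symmetric-in-(m,n) helper inline
    intro m n hco hnorm
    obtain ⟨q, hq, hcase⟩ := nnorm_prime hp
    have hqdvd : q ∣ m * n := by
      rw [← hnorm, nnorm_mul]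
      rcases hcase with h | h
      · exact Dvd.dvd.mul_right (h ▸ dvd_refl _) _
      · exact Dvd.dvd.mul_right (h ▸ dvd_pow_self q two_ne_zero) _
    -- helper: the case q ∣ m
    have key : ∀ m n : ℕ, Nat.Coprime m n → nnorm (p * a) = m * n → q ∣ m →
        ∃ x y : GI, p * a = x * y ∧ nnorm x = m ∧ nnorm y = n := by
      intro m n hco hnorm hqm
      have hqn : ¬ q ∣ n := fun h =>
        Nat.Prime.one_lt hq |>.ne' (Nat.eq_one_of_dvd_coprimes hco hqm h)
      have hNpm : nnorm p ∣ m := by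
        rcases hcase with h | h
        · rwa [h]
        · rw [h]
          refine (Nat.Coprime.dvd_of_dvd_mul_right
            (Nat.Coprime.pow_left _ ((Nat.Prime.coprime_iff_not_dvd hq).mpr hqn)) ?_)
          rw [← hnorm, nnorm_mul]
          exact Dvd.dvd.mul_right (h ▸ dvd_refl _) _
      obtain ⟨m', rfl⟩ := hNpm
      have hNp0 : nnorm p ≠ 0 := fun h => hp.ne_zero (nnorm_eq_zero.mp h)
      have hna : nnorm a = m' * n := by
        have h2 : nnorm p * nnorm a = nnorm p * (m' * n) := by
          rw [← nnorm_mul, hnorm]; ring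
        exact Nat.eq_of_mul_eq_mul_left (Nat.pos_of_ne_zero hNp0) h2
      obtain ⟨x, y, hxy, hx, hy⟩ := ih m' n (Nat.Coprime.coprime_dvd_left (dvd_mul_left m' (nnorm p)) hco) hna
      exact ⟨p * x, y, by rw [hxy]; ring, by rw [nnorm_mul, hx], hy⟩
    rcases (Nat.Prime.dvd_mul hq).mp hqdvd with h | h
    · exact key m n hco hnorm h
    · obtain ⟨x, y, hxy, hx, hy⟩ := key n m hco.symm (by rw [hnorm]; ring) h
      exact ⟨y, x, by rw [hxy]; ring, hy, hx⟩


lemma nnorm_neg (z : GI) : nnorm (-z) = nnorm z := by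
  simp [nnorm, Zsqrtd.norm_neg]

lemma S_finite (n : ℕ) : {z : GI | nnorm z = n}.Finite := by
  apply Set.Finite.subset (((Set.finite_Icc (-(n:ℤ)) n).prod (Set.finite_Icc (-(n:ℤ)) n)).image
    (fun p : ℤ × ℤ => (⟨p.1, p.2⟩ : GI)))
  rintro z hz
  have hnorm : z.re * z.re + z.im * z.im = (n : ℤ) := by
    rw [← norm_def', norm_eq, hz]
  have h1 := sq_le (show z.re * z.re ≤ (n:ℤ) by nlinarith [mul_self_nonneg z.im])
  have h2 := sq_le (show z.im * z.im ≤ (n:ℤ) by nlinarith [mul_self_nonneg z.re])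
  exact ⟨(z.re, z.im), ⟨Set.mem_Icc.mpr ⟨h1.1, h1.2⟩, Set.mem_Icc.mpr ⟨h2.1, h2.2⟩⟩, rfl⟩

noncomputable def Sf (n : ℕ) : Finset GI := (S_finite n).toFinset

lemma mem_Sf {n : ℕ} {z : GI} : z ∈ Sf n ↔ nnorm z = n := Set.Finite.mem_toFinset _

lemma hgi2 : gi * gi = -1 := by decide

lemma nnorm_gi : nnorm gi = 1 := by decide

lemma four_ne {x : GI} (hx : x ≠ 0) :
    x ≠ -x ∧ x ≠ gi * x ∧ x ≠ -(gi * x) ∧ -x ≠ gi * x ∧ -x ≠ -(gi * x) ∧ gi * x ≠ -(gi * x) := by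
  have h0 : x.re ≠ 0 ∨ x.im ≠ 0 := by
    by_contra h; push_neg at h
    exact hx (by rw [Zsqrtd.ext_iff]; exact ⟨h.1, h.2⟩)
  rcases h0 with h0 | h0 <;>
    refine ⟨?_, ?_, ?_, ?_, ?_, ?_⟩ <;>
    · intro h
      rw [Zsqrtd.ext_iff] at h
      simp only [gi, Zsqrtd.re_mul, Zsqrtd.im_mul, Zsqrtd.re_neg, Zsqrtd.im_neg] at h
      omega

lemma fiber_card {m n : ℕ} (hm : m ≠ 0) (hn : n ≠ 0) (hco : Nat.Coprime m n)
    {z : GI} (hz : z ∈ Sf (m * n)) :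
    (((Sf m) ×ˢ (Sf n)).filter (fun p => p.1 * p.2 = z)).card = 4 := by
  obtain ⟨x, y, rfl, hx, hy⟩ := split z m n hco (mem_Sf.mp hz)
  have hx0 : x ≠ 0 := fun h => hm (by rw [← hx, h, nnorm_eq_zero.mpr rfl])
  have hy0 : y ≠ 0 := fun h => hn (by rw [← hy, h, nnorm_eq_zero.mpr rfl])
  have hkey : ((Sf m) ×ˢ (Sf n)).filter (fun p => p.1 * p.2 = x * y) =
      {(x, y), (-x, -y), (gi * x, -(gi * y)), (-(gi * x), gi * y)} := by
    ext ⟨w1, w2⟩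
    simp only [Finset.mem_filter, Finset.mem_product, mem_Sf, Finset.mem_insert,
      Finset.mem_singleton, Prod.mk.injEq]
    constructor
    · rintro ⟨⟨hw1, hw2⟩, hprod⟩
      have hc1 : IsCoprime w1 y := isCoprime_of_norm_coprime (by rw [hw1, hy]; exact hco)
      have hc2 : IsCoprime x w2 := isCoprime_of_norm_coprime (by rw [hx, hw2]; exact hco)
      have hd1 : w1 ∣ x := hc1.dvd_of_dvd_mul_right (by rw [← hprod]; exact dvd_mul_right w1 w2)
      have hd2 : x ∣ w1 := hc2.dvd_of_dvd_mul_right (by rw [hprod]; exact dvd_mul_right x y)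
      have hassoc := associated_of_dvd_dvd hd2 hd1
      rcases (associated_iff x w1).mp hassoc with h | h | h | h
      · subst h
        left
        exact ⟨rfl, mul_left_cancel₀ hx0 hprod⟩
      · subst h
        right; left
        refine ⟨rfl, ?_⟩
        have : x * y = x * (-w2) := by rw [← hprod]; ring
        have := mul_left_cancel₀ hx0 this
        rw [this]; ring
      · subst h
        right; right; left
        refine ⟨rfl, ?_⟩
        have h1 : x * y = x * (gi * w2) := by rw [← hprod]; ring
        have h2 := mul_left_cancel₀ hx0 h1
        have : gi * y = gi * (gi * w2) := by rw [h2]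
        rw [show gi * (gi * w2) = (gi * gi) * w2 from by ring, hgi2] at this
        rw [this]; ring
      · subst h
        right; right; right
        refine ⟨by ring, ?_⟩
        have h1 : x * y = x * (-(gi * w2)) := by rw [← hprod]; ring
        have h2 := mul_left_cancel₀ hx0 h1
        have : gi * y = gi * (-(gi * w2)) := by rw [h2]
        rw [show gi * (-(gi * w2)) = -((gi * gi) * w2) from by ring, hgi2] at this
        rw [this]; ring
    · have e1 : nnorm (gi * x) = m := by rw [nnorm_mul, nnorm_gi, one_mul, hx]
      have e2 : nnorm (gi * y) = n := by rw [nnorm_mul, nnorm_gi, one_mul, hy]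
      have e3 : (gi * x) * (-(gi * y)) = x * y := by
        rw [show (gi * x) * (-(gi * y)) = -((gi * gi) * (x * y)) from by ring, hgi2]; ring
      have e4 : (-(gi * x)) * (gi * y) = x * y := by
        rw [show (-(gi * x)) * (gi * y) = -((gi * gi) * (x * y)) from by ring, hgi2]; ring
      rintro (⟨rfl, rfl⟩ | ⟨rfl, rfl⟩ | ⟨rfl, rfl⟩ | ⟨rfl, rfl⟩)
      · exact ⟨⟨hx, hy⟩, rfl⟩
      · exact ⟨⟨by rw [nnorm_neg, hx], by rw [nnorm_neg, hy]⟩, by ring⟩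
      · exact ⟨⟨e1, by rw [nnorm_neg, e2]⟩, e3⟩
      · exact ⟨⟨by rw [nnorm_neg, e1], e2⟩, e4⟩
  rw [hkey]
  have d := four_ne hx0
  rw [Finset.card_insert_of_notMem (by
        simp [Prod.ext_iff, d.1, d.2.1, d.2.2.1]),
      Finset.card_insert_of_notMem (by
        simp [Prod.ext_iff, d.2.2.2.1, d.2.2.2.2.1]),
      Finset.card_insert_of_notMem (by
        simp [Prod.ext_iff, d.2.2.2.2.2]),
      Finset.card_singleton]

lemma card_mul {m n : ℕ} (hm : m ≠ 0) (hn : n ≠ 0) (hco : Nat.Coprime m n) :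
    (Sf m).card * (Sf n).card = 4 * (Sf (m * n)).card := by
  rw [← Finset.card_product]
  rw [Finset.card_eq_sum_card_fiberwise (f := fun p : GI × GI => p.1 * p.2) (t := Sf (m * n))
    (fun p hp => by
      rw [Finset.mem_coe, Finset.mem_product] at hp
      rw [Finset.mem_coe, mem_Sf, nnorm_mul, mem_Sf.mp hp.1, mem_Sf.mp hp.2])]
  rw [Finset.sum_congr rfl (fun z hz => fiber_card hm hn hco hz), Finset.sum_const,
    smul_eq_mul, mul_comm]


lemma nnorm_pow (z : GI) (k : ℕ) : nnorm (z ^ k) = nnorm z ^ k := by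
  induction k with
  | zero => simpa using nnorm_one
  | succ k ih => rw [pow_succ, nnorm_mul, ih, pow_succ]

lemma nnorm_cast_eq (z : GI) : ((nnorm z : ℕ) : GI) = z * star z := by
  have h : ((nnorm z : ℤ) : GI) = z * star z := by
    rw [← norm_eq]; exact Zsqrtd.norm_eq_mul_conj z
  rw [← h]; push_cast; rfl

lemma prime_of_nnorm_prime {z : GI} (h : (nnorm z).Prime) : Prime z := by
  rw [← UniqueFactorizationMonoid.irreducible_iff_prime]
  constructor
  · exact fun hu => h.ne_one (nnorm_eq_one.mpr hu)
  · intro a b hab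
    have h2 : nnorm a * nnorm b = nnorm z := by rw [← nnorm_mul, ← hab]
    rcases (Nat.prime_mul_iff.mp (h2 ▸ h)) with ⟨_, h1⟩ | ⟨_, h1⟩
    · exact Or.inr (nnorm_eq_one.mp h1)
    · exact Or.inl (nnorm_eq_one.mp h1)

lemma card_Sf_one : (Sf 1).card = 4 := by
  have h : Sf 1 = ({1, -1, gi, -gi} : Finset GI) := by
    ext z
    rw [mem_Sf, nnorm_eq_one, isUnit_iff']
    simp
  rw [h]; decide

/-- key cardinality step: multiplying by a prime `t` with `t ∣ star t` -/
lemma card_step {t : GI} (ht : Prime t) (hstar : t ∣ star t) (N : ℕ) :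
    (Sf (nnorm t * N)).card = (Sf N).card := by
  have him : Sf (nnorm t * N) = (Sf N).image (fun w => t * w) := by
    ext z
    rw [mem_Sf, Finset.mem_image]
    constructor
    · intro hz
      have hdvd : t ∣ z * star z := by
        rw [← nnorm_cast_eq, hz]
        push_cast
        exact Dvd.dvd.mul_right (by rw [nnorm_cast_eq]; exact dvd_mul_right _ _) _
      have htz : t ∣ z := by
        rcases ht.2.2 _ _ hdvd with h | h
        · exact h
        · obtain ⟨c, hc⟩ := h
          have : star t ∣ z := ⟨star c, by rw [← star_star z, hc]; simp [mul_comm]⟩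
          exact dvd_trans hstar this
      obtain ⟨w, rfl⟩ := htz
      refine ⟨w, ?_, rfl⟩
      rw [nnorm_mul] at hz
      rw [mem_Sf]
      exact Nat.eq_of_mul_eq_mul_left
        (Nat.pos_of_ne_zero (fun h => ht.ne_zero (nnorm_eq_zero.mp h))) hz
    · rintro ⟨w, hw, rfl⟩
      rw [nnorm_mul, mem_Sf.mp hw]
  rw [him, Finset.card_image_of_injective _ (mul_right_injective₀ ht.ne_zero)]

lemma card_two_pow (k : ℕ) : (Sf (2 ^ k)).card = 4 := by
  induction k with
  | zero => simpa using card_Sf_one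
  | succ k ih =>
    have ht : Prime (⟨1, 1⟩ : GI) := prime_of_nnorm_prime (by norm_num [nnorm, Zsqrtd.norm_def])
    have h2 : nnorm (⟨1, 1⟩ : GI) = 2 := by norm_num [nnorm, Zsqrtd.norm_def]
    have hstar : (⟨1, 1⟩ : GI) ∣ star (⟨1, 1⟩ : GI) := ⟨-gi, by decide⟩
    have := card_step ht hstar (2 ^ k)
    rw [h2, ← pow_succ'] at this
    rw [this, ih]

lemma card_p3_pow {p : ℕ} (hp : p.Prime) (h3 : p % 4 = 3) (k : ℕ) :
    (Sf (p ^ k)).card = if k % 2 = 0 then 4 else 0 := by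
  haveI := Fact.mk hp
  have htp : Prime ((p : ℕ) : GI) := GaussianInt.prime_of_nat_prime_of_mod_four_eq_three p h3
  induction k using Nat.strong_induction_on with
  | _ k ih =>
    match k with
    | 0 => simpa using card_Sf_one
    | 1 =>
      rw [if_neg (by omega)]
      rw [Finset.card_eq_zero]
      by_contra h
      obtain ⟨z, hz⟩ := Finset.nonempty_iff_ne_empty.mpr h
      rw [mem_Sf, pow_one] at hz
      have : ((p : ℕ) : GI) = z * star z := by rw [← hz, nnorm_cast_eq]
      have hirr := htp.irreducible
      rcases hirr.isUnit_or_isUnit this with h | h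
      · exact hp.ne_one ((hz ▸ nnorm_eq_one.mpr h : p = 1))
      · have := nnorm_eq_one.mpr h
        rw [nnorm_star, hz] at this
        exact hp.ne_one this
    | (k + 2) =>
      have hstar : ((p : ℕ) : GI) ∣ star ((p : ℕ) : GI) := by rw [star_natCast]
      have hs := card_step htp hstar (p ^ k)
      have hnn : nnorm ((p : ℕ) : GI) * p ^ k = p ^ (k + 2) := by
        rw [nnorm_natCast]; ring
      rw [hnn] at hs
      rw [hs, ih k (by omega), Nat.add_mod_right]


section Split
variable {π : GI}

lemma classify (hπ : Prime π) : ∀ (k : ℕ) (z : GI), nnorm z = nnorm π ^ k →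
    ∃ u j, (u = 1 ∨ u = -1 ∨ u = gi ∨ u = -gi) ∧ j ≤ k ∧ z = u * π ^ j * (star π) ^ (k - j) := by
  intro k
  induction k with
  | zero =>
    intro z hz
    rcases (isUnit_iff' z).mp (nnorm_eq_one.mp (by simpa using hz)) with h | h | h | h <;>
      exact ⟨z, 0, by tauto, le_refl 0, by simp⟩
  | succ k ih =>
    intro z hz
    have hdvd : π ∣ z * star z := by
      rw [← nnorm_cast_eq, hz]
      push_cast
      exact dvd_pow (by rw [nnorm_cast_eq]; exact dvd_mul_right _ _) (Nat.succ_ne_zero k)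
    have hp0 : nnorm π ≠ 0 := fun h => hπ.ne_zero (nnorm_eq_zero.mp h)
    rcases hπ.2.2 _ _ hdvd with h | h
    · obtain ⟨w, rfl⟩ := h
      rw [nnorm_mul, pow_succ'] at hz
      have hw : nnorm w = nnorm π ^ k :=
        Nat.eq_of_mul_eq_mul_left (Nat.pos_of_ne_zero hp0) hz
      obtain ⟨u, j, hu, hj, rfl⟩ := ih w hw
      exact ⟨u, j + 1, hu, by omega, by
        rw [show k + 1 - (j + 1) = k - j from by omega]; ring⟩
    · obtain ⟨c, hc⟩ := h
      have hsdvd : star π ∣ z := ⟨star c, by rw [← star_star z, hc]; simp [mul_comm]⟩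
      obtain ⟨w, rfl⟩ := hsdvd
      rw [nnorm_mul, nnorm_star, pow_succ'] at hz
      have hw : nnorm w = nnorm π ^ k :=
        Nat.eq_of_mul_eq_mul_left (Nat.pos_of_ne_zero hp0) hz
      obtain ⟨u, j, hu, hj, rfl⟩ := ih w hw
      exact ⟨u, j, hu, by omega, by
        rw [show k + 1 - j = (k - j) + 1 from by omega, pow_succ]; ring⟩

lemma classify_le (hπ : Prime π) (hsπ : Prime (star π)) (hna : ¬ Associated π (star π)) {k : ℕ} {u v : GI} {j l : ℕ} (hu : IsUnit u) (hjl : j ≤ l) (hl : l ≤ k)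
    (heq : u * π ^ j * (star π) ^ (k - j) = v * π ^ l * (star π) ^ (k - l)) : j = l := by
  by_contra hne
  have hjk : j < l := lt_of_le_of_ne hjl hne
  have hcan : u * (star π) ^ (k - j) = v * π ^ (l - j) * (star π) ^ (k - l) := by
    have h2 : π ^ j * (u * (star π) ^ (k - j)) = π ^ j * (v * π ^ (l - j) * (star π) ^ (k - l)) := by
      rw [show π ^ j * (v * π ^ (l - j) * (star π) ^ (k - l)) =
        v * (π ^ j * π ^ (l - j)) * (star π) ^ (k - l) from by ring, ← pow_add,
        show j + (l - j) = l from by omega]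
      rw [show π ^ j * (u * (star π) ^ (k - j)) = u * π ^ j * (star π) ^ (k - j) from by ring]
      exact heq
    exact mul_left_cancel₀ (pow_ne_zero _ hπ.ne_zero) h2
  have hπdvd : π ∣ u * (star π) ^ (k - j) := by
    rw [hcan]
    exact Dvd.dvd.mul_right (Dvd.dvd.mul_left (dvd_pow_self π (by omega : l - j ≠ 0)) v) _
  have : π ∣ (star π) ^ (k - j) := by
    rcases hπ.2.2 _ _ hπdvd with h | h
    · exact absurd (isUnit_of_dvd_unit h hu) hπ.not_unit
    · exact h
  exact hna (hπ.irreducible.associated_of_dvd hsπ.irreducible (hπ.dvd_of_dvd_pow this))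

lemma classify_inj (hπ : Prime π) (hsπ : Prime (star π)) (hna : ¬ Associated π (star π)) {k : ℕ} {u v : GI} {j l : ℕ} (hu : IsUnit u) (hv : IsUnit v)
    (hj : j ≤ k) (hl : l ≤ k)
    (heq : u * π ^ j * (star π) ^ (k - j) = v * π ^ l * (star π) ^ (k - l)) :
    u = v ∧ j = l := by
  have hjl : j = l := by
    rcases le_total j l with h | h
    · exact classify_le hπ hsπ hna hu h hl heq
    · exact (classify_le hπ hsπ hna hv h hj heq.symm).symm
  subst hjl
  refine ⟨?_, rfl⟩
  have hM : π ^ j * (star π) ^ (k - j) ≠ 0 :=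
    mul_ne_zero (pow_ne_zero _ hπ.ne_zero) (pow_ne_zero _ hsπ.ne_zero)
  apply mul_right_cancel₀ hM
  rw [show u * (π ^ j * (star π) ^ (k - j)) = u * π ^ j * (star π) ^ (k - j) from by ring,
    show v * (π ^ j * (star π) ^ (k - j)) = v * π ^ j * (star π) ^ (k - j) from by ring]
  exact heq

lemma card_p1_pow (hπ : Prime π) (hsπ : Prime (star π)) (hna : ¬ Associated π (star π)) (k : ℕ) : (Sf (nnorm π ^ k)).card = 4 * (k + 1) := by
  have him : Sf (nnorm π ^ k) =
      (({1, -1, gi, -gi} : Finset GI) ×ˢ Finset.range (k + 1)).image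
        (fun uj : GI × ℕ => uj.1 * π ^ uj.2 * (star π) ^ (k - uj.2)) := by
    ext z
    rw [mem_Sf, Finset.mem_image]
    constructor
    · intro hz
      obtain ⟨u, j, hu, hj, rfl⟩ := classify hπ k z hz
      exact ⟨(u, j), by
        rw [Finset.mem_product, Finset.mem_range]
        exact ⟨by simpa using hu, by omega⟩, rfl⟩
    · rintro ⟨⟨u, j⟩, hmem, rfl⟩
      rw [Finset.mem_product, Finset.mem_range] at hmem
      obtain ⟨hu, hj⟩ := hmem
      have hu1 : nnorm u = 1 := by
        rw [nnorm_eq_one, isUnit_iff']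
        simpa using hu
      rw [nnorm_mul, nnorm_mul, hu1, one_mul, nnorm_pow, nnorm_pow, nnorm_star, ← pow_add,
        show j + (k - j) = k from by omega]
  rw [him, Finset.card_image_of_injOn, Finset.card_product, Finset.card_range]
  · congr 1
  · rintro ⟨u, j⟩ hmem ⟨v, l⟩ hmem' heq
    rw [Finset.coe_product, Set.mem_prod] at hmem hmem'
    simp only [Finset.coe_insert, Set.mem_insert_iff, Finset.coe_singleton,
      Set.mem_singleton_iff, Finset.coe_range, Set.mem_Iio] at hmem hmem'
    have hu : IsUnit u := (isUnit_iff' u).mpr (by tauto)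
    have hv : IsUnit v := (isUnit_iff' v).mpr (by tauto)
    obtain ⟨h1, h2⟩ := classify_inj hπ hsπ hna hu hv (by omega) (by omega) heq
    exact Prod.ext h1 h2

end Split

/-- The character mod 4. -/
def χ (n : ℕ) : ℤ := if n % 4 = 1 then 1 else if n % 4 = 3 then -1 else 0

lemma χ_mul (a b : ℕ) : χ (a * b) = χ a * χ b := by
  have ha : a % 4 = 0 ∨ a % 4 = 1 ∨ a % 4 = 2 ∨ a % 4 = 3 := by omega
  have hb : b % 4 = 0 ∨ b % 4 = 1 ∨ b % 4 = 2 ∨ b % 4 = 3 := by omega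
  have hab : (a * b) % 4 = (a % 4) * (b % 4) % 4 := Nat.mul_mod a b 4
  rcases ha with h|h|h|h <;> rcases hb with h'|h'|h'|h' <;>
    simp [χ, hab, h, h']

/-- χ as an arithmetic function. -/
def χA : ArithmeticFunction ℤ := ⟨χ, by simp [χ]⟩

lemma χA_mult : χA.IsMultiplicative :=
  ⟨by simp [χA, χ], fun _ => χ_mul _ _⟩

def g (n : ℕ) : ℤ := ∑ d ∈ n.divisors, χ d

lemma g_eq (n : ℕ) (hn : n ≠ 0) :
    g n = (((ArithmeticFunction.zeta : ArithmeticFunction ℕ) : ArithmeticFunction ℤ) * χA) n := by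
  rw [ArithmeticFunction.coe_zeta_mul_apply]; rfl

lemma g_mul {m n : ℕ} (h : Nat.Coprime m n) (hm : m ≠ 0) (hn : n ≠ 0) :
    g (m * n) = g m * g n := by
  rw [g_eq _ (by positivity), g_eq _ hm, g_eq _ hn]
  exact (ArithmeticFunction.isMultiplicative_zeta.natCast.mul χA_mult).2 h

lemma χ_pow (p k : ℕ) : χ (p ^ k) = χ p ^ k := by
  induction k with
  | zero => simp [χ]
  | succ k ih => rw [pow_succ, χ_mul, ih, pow_succ]

lemma g_pp {p : ℕ} (hp : p.Prime) (k : ℕ) :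
    g (p ^ k) = if p % 4 = 1 then (k + 1 : ℤ)
      else if p % 4 = 3 then (if k % 2 = 0 then 1 else 0) else 1 := by
  rw [g, Nat.sum_divisors_prime_pow hp]
  simp only [χ_pow]
  by_cases h1 : p % 4 = 1
  · have : χ p = 1 := by simp [χ, h1]
    simp [this, h1]
  · by_cases h3 : p % 4 = 3
    · have : χ p = -1 := by simp [χ, h1, h3]
      rw [this, neg_one_geom_sum, if_neg h1, if_pos h3]
      rcases Nat.even_or_odd k with he | ho
      · rw [if_neg (by simp [Nat.even_add_one, he]), if_pos (Nat.even_iff.mp he)]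
      · rw [if_pos (by simp [Nat.even_add_one, Nat.not_even_iff_odd.mpr ho]),
          if_neg (by simpa [Nat.odd_iff] using ho)]
    · have hz : χ p = 0 := by simp [χ, h1, h3]
      rw [hz, Finset.sum_range_succ']
      simp [h1, h3]


lemma exists_pi {p : ℕ} (hp : p.Prime) (h1 : p % 4 = 1) :
    ∃ π : GI, nnorm π = p ∧ Prime π ∧ Prime (star π) ∧ ¬ Associated π (star π) := by
  haveI := Fact.mk hp
  obtain ⟨a, b, hab⟩ := Nat.Prime.sq_add_sq (p := p) (by omega)
  set π : GI := ⟨(a : ℤ), (b : ℤ)⟩ with hπdef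
  have hn : nnorm π = p := by
    have h2 : π.norm = ((a ^ 2 + b ^ 2 : ℕ) : ℤ) := by
      rw [Zsqrtd.norm_def]; push_cast; ring
    rw [nnorm, h2, hab, Int.natAbs_natCast]
  have hprime : Prime π := prime_of_nnorm_prime (hn ▸ hp)
  have hsprime : Prime (star π) := prime_of_nnorm_prime (by rw [nnorm_star, hn]; exact hp)
  have hsq : ∀ c : ℕ, p ≠ c * c := by
    intro c hc
    have h2 := hp.one_lt
    rcases hp.eq_one_or_self_of_dvd c ⟨c, hc⟩ with h | h
    · subst h; omega
    · subst h; nlinarith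
  refine ⟨π, hn, hprime, hsprime, fun hassoc => ?_⟩
  have hstar : star π = (⟨(a : ℤ), -(b : ℤ)⟩ : GI) := rfl
  rcases (associated_iff π (star π)).mp hassoc with h | h | h | h <;>
      rw [hstar, hπdef, Zsqrtd.ext_iff] at h <;>
      simp only [gi, Zsqrtd.re_mul, Zsqrtd.im_mul, Zsqrtd.re_neg, Zsqrtd.im_neg] at h
  · have hb : b = 0 := by omega
    exact hsq a (by subst hb; simpa [pow_two] using hab.symm)
  · have ha : a = 0 := by omega
    exact hsq b (by subst ha; simpa [pow_two] using hab.symm)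
  · have : a = 0 ∧ b = 0 := by omega
    rw [this.1, this.2] at hab
    simp at hab
    omega
  · have hab2 : a = b := by omega
    subst hab2
    have : p = 2 * (a * a) := by rw [← hab]; ring
    omega

lemma card_pp {p : ℕ} (hp : p.Prime) (k : ℕ) :
    ((Sf (p ^ k)).card : ℤ) = 4 * g (p ^ k) := by
  rw [g_pp hp]
  by_cases h1 : p % 4 = 1
  · obtain ⟨π, hn, h2, h3, h4⟩ := exists_pi hp h1
    rw [if_pos h1, ← hn, card_p1_pow h2 h3 h4 k]
    push_cast; ring
  · by_cases h3 : p % 4 = 3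
    · rw [if_neg h1, if_pos h3, card_p3_pow hp h3 k]
      split_ifs <;> simp
    · have h2 : (2 : ℕ) ∣ p := by omega
      have hp2 : p = 2 := ((hp.eq_one_or_self_of_dvd 2 h2).resolve_left (by norm_num)).symm
      subst hp2
      rw [if_neg h1, if_neg h3, card_two_pow]
      norm_num

lemma g_one : g 1 = 1 := by
  rw [g, Nat.divisors_one]
  simp [χ]

lemma main : ∀ n : ℕ, 0 < n → ((Sf n).card : ℤ) = 4 * g n := by
  intro n
  induction n using Nat.recOnPosPrimePosCoprime with
  | prime_pow p k hpp hk =>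
    exact fun _ => card_pp hpp k
  | zero => exact fun h => absurd h (lt_irrefl 0)
  | one => intro _; rw [card_Sf_one, g_one]; norm_num
  | coprime a b ha hb hco iha ihb =>
    intro _
    have iha' := iha (by omega)
    have ihb' := ihb (by omega)
    have h4 : ((Sf a).card : ℤ) * (Sf b).card = 4 * (Sf (a * b)).card := by
      exact_mod_cast congrArg (fun x : ℕ => (x : ℤ)) (card_mul (by omega) (by omega) hco)
    have hg := g_mul hco (by omega) (by omega)
    have h5 : (4:ℤ) * ((Sf (a * b)).card : ℤ) = 4 * (4 * g (a * b)) := by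
      rw [← h4, iha', ihb', hg]; ring
    exact mul_left_cancel₀ (by norm_num : (4:ℤ) ≠ 0) h5

lemma g_filter (n : ℕ) :
    g n = ((n.divisors.filter (fun d => d % 4 = 1)).card : ℤ) -
      ((n.divisors.filter (fun d => d % 4 = 3)).card : ℤ) := by
  rw [g, ← Finset.sum_boole, ← Finset.sum_boole, ← Finset.sum_sub_distrib]
  refine Finset.sum_congr rfl fun d _ => ?_
  have h : d % 4 = 0 ∨ d % 4 = 1 ∨ d % 4 = 2 ∨ d % 4 = 3 := by omega
  rcases h with h | h | h | h <;> simp [χ, h]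

end TwoSq

/-- `r₂(n)`: number of ordered representations of `n` as a sum of two integer squares. -/
theorem two_squares_formula (n : ℕ) (hn : 0 < n) :
    ({p : ℤ × ℤ | p.1 ^ 2 + p.2 ^ 2 = (n : ℤ)}.ncard : ℤ) =
      4 * (((n.divisors.filter (fun d => d % 4 = 1)).card : ℤ) -
           ((n.divisors.filter (fun d => d % 4 = 3)).card : ℤ)) := by
  have hmain := TwoSq.main n hn
  have hset : {p : ℤ × ℤ | p.1 ^ 2 + p.2 ^ 2 = (n : ℤ)} =
      (fun z : GaussianInt => (z.re, z.im)) '' {z : GaussianInt | TwoSq.nnorm z = n} := by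
    ext ⟨x, y⟩
    simp only [Set.mem_setOf_eq, Set.mem_image]
    constructor
    · intro h
      refine ⟨⟨x, y⟩, ?_, rfl⟩
      have h2 : (⟨x, y⟩ : GaussianInt).norm = (n : ℤ) := by
        rw [Zsqrtd.norm_def]; nlinarith [h]
      show TwoSq.nnorm _ = n
      rw [TwoSq.nnorm, h2, Int.natAbs_natCast]
    · rintro ⟨z, hz, heq⟩
      have hz : TwoSq.nnorm z = n := hz
      have h2 : z.norm = (n : ℤ) := by rw [TwoSq.norm_eq, hz]
      rw [Zsqrtd.norm_def] at h2
      obtain ⟨rfl, rfl⟩ : z.re = x ∧ z.im = y := by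
        rw [Prod.ext_iff] at heq; exact ⟨heq.1, heq.2⟩
      nlinarith [h2]
  have hinj : Function.Injective (fun z : GaussianInt => (z.re, z.im)) := by
    intro z w h
    rw [Prod.ext_iff] at h
    rw [Zsqrtd.ext_iff]
    exact ⟨h.1, h.2⟩
  rw [hset, Set.ncard_image_of_injective _ hinj]
  have hSf : {z : GaussianInt | TwoSq.nnorm z = n} = ↑(TwoSq.Sf n) := by
    ext z; rw [Finset.mem_coe, TwoSq.mem_Sf, Set.mem_setOf_eq]
  rw [hSf, Set.ncard_coe_finset, ← TwoSq.g_filter, hmain]
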